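/- Let a, b, c, d ∈ ℂ with positive real parts. Then for all n ∈ ℕ₀ and x ∈ (0,∞), the continuous dual Hahn polynomials satisfy the one-free-parameter connection relation S_n(x²; a,b,c) = Σ_{k=0}^n C(n,k) (k+a+b)_{n−k} (c−d)_{n−k} · S_k(x²; a,b,d). -/

import Mathlib

open Complex Finset

/-- The Pochhammer symbol (rising factorial) `(z)_n = z(z+1)⋯(z+n-1)`. -/
noncomputable def poch (z : ℂ) (n : ℕ) : ℂ := ∏ i ∈ Finset.range n, (z + i)

/-- The continuous dual Hahn polynomial `S_n(x²; a, b, c)`, via its terminating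
`₃F₂(-n, a+ix, a-ix; a+b, a+c; 1)` representation. -/
noncomputable def cdHahn (n : ℕ) (x : ℝ) (a b c : ℂ) : ℂ :=
  poch (a + b) n * poch (a + c) n *
    ∑ j ∈ Finset.range (n + 1),
      poch (-(n : ℂ)) j * poch (a + Complex.I * x) j * poch (a - Complex.I * x) j /
        (poch (a + b) j * poch (a + c) j * j.factorial)

lemma poch_zero (z : ℂ) : poch z 0 = 1 := by simp [poch]

lemma poch_succ (z : ℂ) (n : ℕ) : poch z (n + 1) = poch z n * (z + n) := by
  simp [poch, Finset.prod_range_succ]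

lemma poch_add (z : ℂ) (m n : ℕ) : poch z (m + n) = poch z m * poch (z + m) n := by
  rw [poch, poch, poch, Finset.prod_range_add]
  congr 1
  refine Finset.prod_congr rfl fun i _ => ?_
  push_cast; ring

lemma poch_ne_zero {z : ℂ} (hz : 0 < z.re) (n : ℕ) : poch z n ≠ 0 := by
  refine Finset.prod_ne_zero_iff.2 fun i _ => ?_
  intro h
  have : (z + i).re = 0 := by rw [h]; simp
  simp only [Complex.add_re, Complex.natCast_re] at this
  have : (0:ℝ) ≤ (i:ℝ) := by positivity
  linarith [Complex.add_re z i]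

lemma poch_neg_nat (k j : ℕ) : poch (-(k : ℂ)) j = (-1) ^ j * (k.descFactorial j : ℂ) := by
  induction j with
  | zero => simp [poch_zero]
  | succ j ih =>
    rw [poch_succ, ih, Nat.descFactorial_succ]
    rcases le_or_gt (j+1) k with h | h
    · push_cast [Nat.cast_sub (by omega : j ≤ k)]
      ring
    · rcases Nat.lt_succ_iff_lt_or_eq.1 h with h' | h'
      · rw [Nat.descFactorial_eq_zero_iff_lt.2 h']; simp
      · subst h'; simp

lemma vdm (u v : ℂ) (N : ℕ) :
    ∑ m ∈ Finset.range (N + 1), (N.choose m : ℂ) * poch u m * poch v (N - m)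
      = poch (u + v) N := by
  induction N with
  | zero => simp [poch_zero]
  | succ N ih =>
    have key : (∑ i ∈ Finset.range (N + 1),
          (N.choose (i+1) : ℂ) * poch u (i+1) * poch v (N - i)) + poch v (N+1)
        = ∑ i ∈ Finset.range (N + 1), (N.choose i : ℂ) * poch u i * poch v (N + 1 - i) := by
      have h := Finset.sum_range_succ'
        (fun i => (N.choose i : ℂ) * poch u i * poch v (N + 1 - i)) (N+1)
      rw [Finset.sum_range_succ
        (fun i => (N.choose i : ℂ) * poch u i * poch v (N + 1 - i)) (N+1)] at h
      simp only [Nat.succ_sub_succ, Nat.choose_succ_self, Nat.cast_zero, zero_mul,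
        add_zero, Nat.choose_zero_right, Nat.cast_one, one_mul, poch_zero,
        Nat.sub_zero] at h
      rw [← h]
    rw [Finset.sum_range_succ']
    have h1 : ∀ i ∈ Finset.range (N + 1),
        ((N+1).choose (i+1) : ℂ) * poch u (i+1) * poch v (N + 1 - (i+1))
        = (N.choose i : ℂ) * poch u (i+1) * poch v (N - i)
          + (N.choose (i+1) : ℂ) * poch u (i+1) * poch v (N - i) := by
      intro i hi
      rw [Nat.choose_succ_succ, Nat.succ_sub_succ]; push_cast; ring
    rw [Finset.sum_congr rfl h1, Finset.sum_add_distrib]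
    simp only [Nat.choose_zero_right, Nat.cast_one, one_mul, poch_zero, Nat.sub_zero]
    rw [add_assoc, key]
    rw [← Finset.sum_add_distrib]
    have h2 : ∀ i ∈ Finset.range (N + 1),
        (N.choose i : ℂ) * poch u (i+1) * poch v (N - i)
          + (N.choose i : ℂ) * poch u i * poch v (N + 1 - i)
        = ((N.choose i : ℂ) * poch u i * poch v (N - i)) * (u + v + N) := by
      intro i hi
      have hi' : i ≤ N := by simpa [Nat.lt_succ_iff] using hi
      rw [show N + 1 - i = (N - i) + 1 by omega, poch_succ, poch_succ,
        Nat.cast_sub hi']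
      ring
    rw [Finset.sum_congr rfl h2, ← Finset.sum_mul, ih, poch_succ]

lemma natD {j k n : ℕ} (hjk : j ≤ k) (hkn : k ≤ n) :
    n.choose k * k.descFactorial j = n.descFactorial j * (n - j).choose (k - j) := by
  rw [Nat.descFactorial_eq_factorial_mul_choose, Nat.descFactorial_eq_factorial_mul_choose]
  rw [show n.choose k * (Nat.factorial j * k.choose j) = Nat.factorial j * (n.choose k * k.choose j) by ring,
    Nat.choose_mul hjk]
  ring

lemma key1 (u w : ℂ) {j n : ℕ} (hj : j ≤ n) :
    ∑ k ∈ Finset.range (n + 1),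
        (n.choose k : ℂ) * poch u (n - k) * poch w k * poch (-(k : ℂ)) j
      = poch (-(n : ℂ)) j * poch w j * poch (u + w + j) (n - j) := by
  have step1 : ∀ k ∈ Finset.range (n + 1),
      (n.choose k : ℂ) * poch u (n - k) * poch w k * poch (-(k : ℂ)) j
      = (-1) ^ j * ((n.choose k * k.descFactorial j : ℕ) * poch u (n - k) * poch w k) := by
    intro k _
    rw [poch_neg_nat]; push_cast; ring
  rw [Finset.sum_congr rfl step1, ← Finset.mul_sum, poch_neg_nat]
  set f : ℕ → ℂ := fun k => ((n.choose k * k.descFactorial j : ℕ) : ℂ) * poch u (n - k) * poch w k with hf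
  have hsub : Finset.Ico j (n + 1) ⊆ Finset.range (n + 1) := by
    intro x hx; simp only [Finset.mem_Ico] at hx; simp [hx.2]
  have hz : ∀ x ∈ Finset.range (n + 1), x ∉ Finset.Ico j (n + 1) → f x = 0 := by
    intro x hx hx'
    simp only [Finset.mem_range] at hx
    simp only [Finset.mem_Ico, not_and, not_lt] at hx'
    have : x < j := by omega
    simp [hf, Nat.descFactorial_eq_zero_iff_lt.2 this]
  rw [← Finset.sum_subset hsub hz, Finset.sum_Ico_eq_sum_range]
  rw [show n + 1 - j = (n - j) + 1 by omega]
  have step2 : ∀ i ∈ Finset.range ((n - j) + 1),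
      f (j + i) = ((n.descFactorial j : ℕ) : ℂ) * poch w j *
        (((n - j).choose i : ℂ) * poch (w + j) i * poch u ((n - j) - i)) := by
    intro i hi
    have hi' : i ≤ n - j := by simpa [Nat.lt_succ_iff] using hi
    have h1 : n.choose (j + i) * (j + i).descFactorial j
        = n.descFactorial j * (n - j).choose i := by
      rw [natD (Nat.le_add_right j i) (by omega), Nat.add_sub_cancel_left]
    have h2 : n - (j + i) = (n - j) - i := by omega
    simp only [hf, h1, h2, poch_add]
    push_cast; ring
  rw [Finset.sum_congr rfl step2, ← Finset.mul_sum, vdm (w + (j:ℂ)) u (n - j)]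
  ring_nf

lemma key2 (a b c d : ℂ) (ha : 0 < a.re) (hb : 0 < b.re) (hc : 0 < c.re) (hd : 0 < d.re)
    {j n : ℕ} (hj : j ≤ n) :
    ∑ k ∈ Finset.range (n + 1),
        (n.choose k : ℂ) * poch ((k : ℂ) + a + b) (n - k) * poch (c - d) (n - k)
          * poch (a + b) k * poch (a + d) k * poch (-(k : ℂ)) j
          / (poch (a + b) j * poch (a + d) j)
      = poch (a + b) n * poch (a + c) n * poch (-(n : ℂ)) j
          / (poch (a + b) j * poch (a + c) j) := by
  have hab : (0:ℝ) < (a+b).re := by simp [Complex.add_re]; linarith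
  have hac : (0:ℝ) < (a+c).re := by simp [Complex.add_re]; linarith
  have had : (0:ℝ) < (a+d).re := by simp [Complex.add_re]; linarith
  have hD1 : poch (a + b) j * poch (a + d) j ≠ 0 :=
    mul_ne_zero (poch_ne_zero hab j) (poch_ne_zero had j)
  have hD2 : poch (a + b) j * poch (a + c) j ≠ 0 :=
    mul_ne_zero (poch_ne_zero hab j) (poch_ne_zero hac j)
  rw [← Finset.sum_div, div_eq_div_iff hD1 hD2]
  have step1 : ∀ k ∈ Finset.range (n + 1),
      (n.choose k : ℂ) * poch ((k : ℂ) + a + b) (n - k) * poch (c - d) (n - k)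
        * poch (a + b) k * poch (a + d) k * poch (-(k : ℂ)) j
      = poch (a + b) n *
          ((n.choose k : ℂ) * poch (c - d) (n - k) * poch (a + d) k * poch (-(k : ℂ)) j) := by
    intro k hk
    have hk' : k ≤ n := by simpa [Nat.lt_succ_iff] using hk
    have h1 : poch (a + b) n = poch (a + b) k * poch ((k : ℂ) + a + b) (n - k) := by
      rw [show n = k + (n - k) by omega, poch_add]
      rw [show a + b + (k:ℂ) = (k:ℂ) + a + b by ring]
      rw [show k + (n - k) - k = n - k by omega]
    rw [h1]; ring
  rw [Finset.sum_congr rfl step1, ← Finset.mul_sum, key1 (c - d) (a + d) hj]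
  have h2 : poch (a + c) n = poch (a + c) j * poch (c - d + (a + d) + (j:ℂ)) (n - j) := by
    rw [show n = j + (n - j) by omega, poch_add]
    rw [show a + c + (j:ℂ) = c - d + (a + d) + (j:ℂ) by ring]
    rw [show j + (n - j) - j = n - j by omega]
  rw [h2]; ring

theorem cdHahn_connection_one_free (a b c d : ℂ)
    (ha : 0 < a.re) (hb : 0 < b.re) (hc : 0 < c.re) (hd : 0 < d.re)
    (n : ℕ) (x : ℝ) (hx : 0 < x) :
    cdHahn n x a b c =
      ∑ k ∈ Finset.range (n + 1),
        (n.choose k : ℂ) * poch ((k : ℂ) + a + b) (n - k) * poch (c - d) (n - k) *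
          cdHahn k x a b d := by
  unfold cdHahn
  set P : ℕ → ℂ := fun j =>
    poch (a + Complex.I * x) j * poch (a - Complex.I * x) j with hP
  -- expand RHS inner sums to range (n+1)
  have hext : ∀ k ∈ Finset.range (n + 1),
      (n.choose k : ℂ) * poch ((k : ℂ) + a + b) (n - k) * poch (c - d) (n - k) *
        (poch (a + b) k * poch (a + d) k *
          ∑ j ∈ Finset.range (k + 1),
            poch (-(k : ℂ)) j * poch (a + Complex.I * x) j * poch (a - Complex.I * x) j /
              (poch (a + b) j * poch (a + d) j * j.factorial))
      = ∑ j ∈ Finset.range (n + 1),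
          (n.choose k : ℂ) * poch ((k : ℂ) + a + b) (n - k) * poch (c - d) (n - k)
            * poch (a + b) k * poch (a + d) k * poch (-(k : ℂ)) j
            / (poch (a + b) j * poch (a + d) j) * (P j / j.factorial) := by
    intro k hk
    have hk' : k ≤ n := by simpa [Nat.lt_succ_iff] using hk
    have hsub : Finset.range (k + 1) ⊆ Finset.range (n + 1) :=
      Finset.range_subset_range.2 (by omega)
    have hz : ∀ jj ∈ Finset.range (n + 1), jj ∉ Finset.range (k + 1) →
        poch (-(k : ℂ)) jj * poch (a + Complex.I * x) jj * poch (a - Complex.I * x) jj /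
          (poch (a + b) jj * poch (a + d) jj * jj.factorial) = 0 := by
      intro jj _ hjj
      have : k < jj := by simpa [Nat.lt_succ_iff, not_le] using hjj
      rw [poch_neg_nat, Nat.descFactorial_eq_zero_iff_lt.2 this]
      simp
    rw [Finset.sum_subset hsub hz, Finset.mul_sum, Finset.mul_sum]
    refine Finset.sum_congr rfl fun jj _ => ?_
    rw [hP]; ring
  rw [Finset.sum_congr rfl hext, Finset.sum_comm, Finset.mul_sum]
  refine Finset.sum_congr rfl fun j hj => ?_
  have hj' : j ≤ n := by simpa [Nat.lt_succ_iff] using hj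
  rw [← Finset.sum_mul, key2 a b c d ha hb hc hd hj', hP]
  ring
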